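/- Let α > 0, β > 0, ρ > 0 and λ ∈ ℝ, and let s > 0 satisfy |λ| < s^α. Then ∫_0^∞ e^{−st} · t^{β−1} · E_{α,β}^ρ(λ t^α) dt converges and equals s^{αρ−β} / (s^α − λ)^ρ. -/

import Mathlib

open Real Set Filter MeasureTheory

/-- The generalized Mittag-Leffler function
`E_{a,b}^r(x)` given by the series sum over k of Gamma(r+k)/(Gamma(r)*Gamma(a*k+b)) * x^k/k!
(real argument). Poles of Gamma are handled by the entire reciprocal Gamma function:
in Mathlib, `Real.Gamma` vanishes at nonpositive integers and division by zero is zero. -/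
noncomputable def mlf (a b r : ℝ) (x : ℝ) : ℝ :=
  ∑' k : ℕ, Real.Gamma (r + k) / (Real.Gamma r * Real.Gamma (a * k + b)) * x ^ k /
    (Nat.factorial k : ℝ)

noncomputable def mlc (r : ℝ) (k : ℕ) : ℝ :=
  Real.Gamma (r + k) / (Real.Gamma r * (Nat.factorial k : ℝ))

lemma mlc_zero {r : ℝ} (hr : 0 < r) : mlc r 0 = 1 := by
  simp [mlc, div_self (Real.Gamma_pos_of_pos hr).ne']

lemma mlc_succ {r : ℝ} (hr : 0 < r) (k : ℕ) :
    mlc r (k + 1) = mlc r k * ((r + k) / (k + 1)) := by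
  have h1 : r + ((k : ℝ) + 1) = (r + k) + 1 := by ring
  have h2 : Real.Gamma ((r + k) + 1) = (r + k) * Real.Gamma (r + k) :=
    Real.Gamma_add_one (by positivity)
  have h3 : (Nat.factorial (k + 1) : ℝ) = (k + 1) * Nat.factorial k := by
    push_cast [Nat.factorial_succ]; ring
  simp only [mlc, Nat.cast_add, Nat.cast_one, h1, h2, h3]
  have hk1 : ((k : ℝ) + 1) ≠ 0 := by positivity
  have hΓ : Real.Gamma r ≠ 0 := (Real.Gamma_pos_of_pos hr).ne'
  have hf : (Nat.factorial k : ℝ) ≠ 0 := by positivity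
  field_simp

lemma mlc_pos {r : ℝ} (hr : 0 < r) (k : ℕ) : 0 < mlc r k := by
  have : (0:ℝ) < r + k := by positivity
  exact div_pos (Real.Gamma_pos_of_pos this)
    (mul_pos (Real.Gamma_pos_of_pos hr) (by positivity))

lemma tendsto_mlc_ratio (r : ℝ) :
    Tendsto (fun k : ℕ => (r + k) / (k + 1)) atTop (nhds 1) := by
  have h : ∀ k : ℕ, (r + k) / ((k : ℝ) + 1) = 1 + (r - 1) / (k + 1) := by
    intro k
    have : ((k : ℝ) + 1) ≠ 0 := by positivity
    field_simp
    ring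
  simp only [h]
  have h2 : Tendsto (fun k : ℕ => (r - 1) / ((k:ℝ) + 1)) atTop (nhds 0) := by
    apply Tendsto.div_atTop tendsto_const_nhds
    exact tendsto_atTop_add_const_right _ 1 tendsto_natCast_atTop_atTop
  simpa using tendsto_const_nhds.add h2

lemma summable_mlc_mul_pow {r x : ℝ} (hr : 0 < r) (hx : |x| < 1) :
    Summable (fun k : ℕ => mlc r k * x ^ k) := by
  rcases eq_or_ne x 0 with rfl | hx0
  · apply summable_of_ne_finset_zero (s := {0})
    intro k hk
    simp [zero_pow (by simpa using hk)]
  · apply summable_of_ratio_test_tendsto_lt_one hx (Eventually.of_forall fun k => ?_)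
    · have : Tendsto (fun k : ℕ => (r + k) / (k + 1) * |x|) atTop (nhds (1 * |x|)) :=
        (tendsto_mlc_ratio r).mul tendsto_const_nhds
      rw [one_mul] at this
      convert this using 2 with k
      have hck := (mlc_pos hr k).ne'
      rw [mlc_succ hr k]
      simp only [norm_mul, norm_pow, Real.norm_eq_abs, pow_succ, abs_mul]
      rw [abs_of_pos (mlc_pos hr k), abs_of_pos (by positivity : (0:ℝ) < (r + k)/(k+1))]
      have h1 : |x| ^ k ≠ 0 := pow_ne_zero _ (abs_ne_zero.2 hx0)
      field_simp
    · exact mul_ne_zero (mlc_pos hr k).ne' (pow_ne_zero _ hx0)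

lemma tendsto_mlc_ratio' (r : ℝ) :
    Tendsto (fun k : ℕ => (r + k) / k) atTop (nhds 1) := by
  have h : ∀ᶠ k : ℕ in atTop, 1 + r / (k:ℝ) = (r + k) / k := by
    filter_upwards [eventually_gt_atTop 0] with k hk
    have : (k:ℝ) ≠ 0 := by positivity
    field_simp
    ring
  rw [show (1:ℝ) = 1 + 0 by ring]
  refine Tendsto.congr' h (tendsto_const_nhds.add ?_)
  exact Tendsto.div_atTop tendsto_const_nhds tendsto_natCast_atTop_atTop

lemma summable_mlc_deriv {r x : ℝ} (hr : 0 < r) (hx0 : 0 ≤ x) (hx : x < 1) :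
    Summable (fun k : ℕ => mlc r k * (k * x ^ (k - 1))) := by
  rcases eq_or_lt_of_le hx0 with rfl | hxpos
  · apply summable_of_ne_finset_zero (s := {0, 1})
    intro k hk
    simp only [Finset.mem_insert, Finset.mem_singleton, not_or] at hk
    rw [zero_pow (by omega)]
    simp
  · have hx1 : |x| < 1 := by rwa [abs_of_pos hxpos]
    have key : Tendsto (fun k : ℕ => (r + k) / k * |x|) atTop (nhds (1 * |x|)) :=
      (tendsto_mlc_ratio' r).mul tendsto_const_nhds
    rw [one_mul] at key
    have hne : ∀ᶠ k : ℕ in atTop, mlc r k * ((k:ℝ) * x ^ (k-1)) ≠ 0 := by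
      filter_upwards [eventually_ge_atTop 1] with k hk
      have hk0 : (0:ℝ) < k := by exact_mod_cast hk
      exact mul_ne_zero (mlc_pos hr k).ne'
        (mul_ne_zero hk0.ne' (pow_ne_zero _ hxpos.ne'))
    have heq : (fun k : ℕ => (r + k) / k * |x|) =ᶠ[atTop]
        (fun k : ℕ => ‖mlc r (k+1) * (((k:ℕ)+1 : ℕ) * x ^ ((k+1) - 1))‖ /
          ‖mlc r k * ((k:ℝ) * x ^ (k-1))‖) := by
      filter_upwards [eventually_ge_atTop 1] with k hk
      have hk0 : (0:ℝ) < k := by exact_mod_cast hk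
      have hxk : (0:ℝ) < x ^ (k-1) := pow_pos hxpos _
      have hnum : mlc r (k+1) * ((k:ℝ)+1) * x ^ k = mlc r k * (r+k) * x ^ k := by
        rw [mlc_succ hr k]
        have : ((k:ℝ)+1) ≠ 0 := by positivity
        field_simp
      have hk1 : (0:ℝ) < (k:ℝ) + 1 := by positivity
      have e1 : ‖mlc r (k+1) * (((k:ℕ)+1 : ℕ) * x ^ ((k+1) - 1))‖
          = mlc r k * (r+k) * x ^ k := by
        rw [Real.norm_eq_abs, Nat.add_sub_cancel, abs_of_pos
          (mul_pos (mlc_pos hr _) (mul_pos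
            (by exact_mod_cast Nat.succ_pos k : (0:ℝ) < ((k+1 : ℕ):ℝ))
            (pow_pos hxpos _)))]
        push_cast
        rw [← mul_assoc, hnum]
      have e2 : ‖mlc r k * ((k:ℝ) * x ^ (k-1))‖ = mlc r k * k * x ^ (k-1) := by
        rw [Real.norm_eq_abs, abs_of_pos (mul_pos (mlc_pos hr _) (mul_pos hk0 hxk))]
        ring
      have hxs : x ^ k = x ^ (k-1) * x := by
        rw [← pow_succ]
        congr 1
        omega
      have hcp : mlc r k * x ^ (k-1) ≠ 0 := (mul_pos (mlc_pos hr k) hxk).ne'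
      rw [e1, e2, hxs, abs_of_pos hxpos,
        show mlc r k * (r + ↑k) * (x ^ (k-1) * x) = ((r+(k:ℝ)) * x) * (mlc r k * x ^ (k-1))
          by ring,
        show mlc r k * ↑k * x ^ (k-1) = (k:ℝ) * (mlc r k * x ^ (k-1)) by ring,
        mul_div_mul_right _ _ hcp, div_mul_eq_mul_div]
    exact summable_of_ratio_test_tendsto_lt_one hx1 hne (key.congr' heq)

lemma summable_mlc_deriv' {r y : ℝ} (hr : 0 < r) (hy : |y| < 1) :
    Summable (fun k : ℕ => mlc r k * ((k:ℝ) * y ^ (k - 1))) := by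
  apply Summable.of_norm_bounded (summable_mlc_deriv hr (abs_nonneg y) hy)
  intro k
  rw [Real.norm_eq_abs, abs_mul, abs_mul, abs_of_pos (mlc_pos hr k), abs_pow,
    Nat.abs_cast]

lemma hasDerivAt_mlcSum {r : ℝ} (hr : 0 < r) {x : ℝ} (hx : |x| < 1) :
    HasDerivAt (fun y => ∑' k : ℕ, mlc r k * y ^ k)
      (∑' k : ℕ, mlc r k * ((k:ℝ) * x ^ (k - 1))) x := by
  set ρ : ℝ := (|x| + 1) / 2 with hρ
  have hρ0 : 0 < ρ := by positivity
  have hρ1 : ρ < 1 := by rw [hρ]; linarith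
  have hxρ : |x| < ρ := by rw [hρ]; linarith
  have hbound : ∀ (n : ℕ), ∀ y ∈ Ioo (-ρ) ρ,
      ‖mlc r n * ((n:ℝ) * y ^ (n - 1))‖ ≤ mlc r n * ((n:ℝ) * ρ ^ (n - 1)) := by
    intro n y hy
    have hyρ : |y| ≤ ρ := le_of_lt (abs_lt.mpr ⟨hy.1, hy.2⟩)
    rw [Real.norm_eq_abs, abs_mul, abs_mul, abs_of_pos (mlc_pos hr n), abs_pow,
      Nat.abs_cast]
    have h1 : |y| ^ (n - 1) ≤ ρ ^ (n - 1) := pow_le_pow_left₀ (abs_nonneg y) hyρ _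
    have hn : (0:ℝ) ≤ n := Nat.cast_nonneg n
    exact mul_le_mul_of_nonneg_left (mul_le_mul_of_nonneg_left h1 hn) (mlc_pos hr n).le
  exact hasDerivAt_tsum_of_isPreconnected
    (summable_mlc_deriv hr hρ0.le hρ1) isOpen_Ioo
    ((convex_Ioo (-ρ) ρ).isPreconnected)
    (fun n y _ => (hasDerivAt_pow n y).const_mul (mlc r n))
    hbound (by constructor <;> [linarith; exact hρ0] :
      (0:ℝ) ∈ Ioo (-ρ) ρ)
    (summable_mlc_mul_pow hr (by simp : |(0:ℝ)| < 1))
    (abs_lt.mp hxρ : x ∈ Ioo (-ρ) ρ)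

lemma mlc_ode {r : ℝ} (hr : 0 < r) {y : ℝ} (hy : |y| < 1) :
    (1 - y) * (∑' k : ℕ, mlc r k * ((k:ℝ) * y ^ (k - 1)))
      = r * ∑' k : ℕ, mlc r k * y ^ k := by
  have hsd : Summable (fun k : ℕ => mlc r k * ((k:ℝ) * y ^ (k - 1))) :=
    summable_mlc_deriv' hr hy
  have hshift : Summable (fun k : ℕ => mlc r (k+1) * (((k+1:ℕ):ℝ) * y ^ ((k+1) - 1))) :=
    (summable_nat_add_iff 1).2 hsd
  have hd1 : ∀ k : ℕ, mlc r (k+1) * (((k+1:ℕ):ℝ) * y ^ ((k+1) - 1))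
      = mlc r k * (r + k) * y ^ k := by
    intro k
    have hk1 : ((k:ℝ) + 1) ≠ 0 := by positivity
    rw [mlc_succ hr k]
    simp only [Nat.add_sub_cancel]
    push_cast
    field_simp
  have hyd : ∀ k : ℕ, y * (mlc r k * ((k:ℝ) * y ^ (k - 1)))
      = mlc r k * (k:ℝ) * y ^ k := by
    intro k
    cases k with
    | zero => simp
    | succ n =>
      simp only [Nat.add_sub_cancel]
      rw [pow_succ]
      push_cast
      ring
  have hsum1 : Summable (fun k : ℕ => mlc r k * (r + k) * y ^ k) :=
    hshift.congr fun k => hd1 k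
  have hsum2 : Summable (fun k : ℕ => mlc r k * (k:ℝ) * y ^ k) :=
    (hsd.mul_left y).congr fun k => hyd k
  have e1 : ∑' k : ℕ, mlc r k * ((k:ℝ) * y ^ (k - 1))
      = ∑' k : ℕ, mlc r k * (r + k) * y ^ k := by
    rw [hsd.tsum_eq_zero_add]
    simp only [Nat.cast_zero, zero_mul, mul_zero, zero_add]
    exact tsum_congr fun k => hd1 k
  have e2 : y * ∑' k : ℕ, mlc r k * ((k:ℝ) * y ^ (k - 1))
      = ∑' k : ℕ, mlc r k * (k:ℝ) * y ^ k := by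
    rw [← tsum_mul_left]
    exact tsum_congr fun k => hyd k
  calc (1 - y) * ∑' k : ℕ, mlc r k * ((k:ℝ) * y ^ (k - 1))
      = (∑' k : ℕ, mlc r k * ((k:ℝ) * y ^ (k - 1)))
        - y * ∑' k : ℕ, mlc r k * ((k:ℝ) * y ^ (k - 1)) := by ring
    _ = (∑' k : ℕ, mlc r k * (r + k) * y ^ k)
        - ∑' k : ℕ, mlc r k * (k:ℝ) * y ^ k := by rw [e2, e1]
    _ = ∑' k : ℕ, (mlc r k * (r + k) * y ^ k - mlc r k * (k:ℝ) * y ^ k) :=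
        (Summable.tsum_sub hsum1 hsum2).symm
    _ = r * ∑' k : ℕ, mlc r k * y ^ k := by
        rw [← tsum_mul_left]
        exact tsum_congr fun k => by ring

lemma hasSum_mlc {r : ℝ} (hr : 0 < r) {x : ℝ} (hx : |x| < 1) :
    HasSum (fun k : ℕ => mlc r k * x ^ k) ((1 - x) ^ (-r)) := by
  set f : ℝ → ℝ := fun y => ∑' k : ℕ, mlc r k * y ^ k with hf
  set g : ℝ → ℝ := fun y => (1 - y) ^ r * f y with hg
  have hgderiv : ∀ y ∈ Ioo (-1:ℝ) 1, HasDerivAt g 0 y := by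
    intro y hy
    have hy1 : |y| < 1 := abs_lt.mpr ⟨hy.1, hy.2⟩
    have h1y : (0:ℝ) < 1 - y := by linarith [hy.2]
    have h1 : HasDerivAt (fun z : ℝ => (1 - z) ^ r) (-1 * r * (1 - y) ^ (r - 1)) y := by
      have hid : HasDerivAt (fun z : ℝ => 1 - z) (-1) y := by
        simpa using (hasDerivAt_id y).const_sub 1
      exact hid.rpow_const (Or.inl h1y.ne')
    have h2 := hasDerivAt_mlcSum hr hy1
    have hprod := h1.mul h2
    refine hprod.congr_deriv ?_
    have hode := mlc_ode hr hy1
    have hfac : (1 - y) ^ r = (1 - y) ^ (r - 1) * (1 - y) := by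
      rw [Real.rpow_sub h1y, Real.rpow_one, div_mul_cancel₀ _ h1y.ne']
    rw [hfac]
    linear_combination ((1 - y) ^ (r - 1)) * hode
  have hconst : g x = g 0 := by
    apply (convex_Ioo (-1:ℝ) 1).is_const_of_fderivWithin_eq_zero
      (fun y hy => ((hgderiv y hy).differentiableAt).differentiableWithinAt)
      (fun y hy => ?_) (abs_lt.mp hx : x ∈ Ioo (-1:ℝ) 1)
      (by constructor <;> norm_num : (0:ℝ) ∈ Ioo (-1:ℝ) 1)
    rw [fderivWithin_of_isOpen isOpen_Ioo hy, (hgderiv y hy).hasFDerivAt.fderiv]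
    ext z
    simp
  have hf0 : f 0 = 1 := by
    show (∑' k : ℕ, mlc r k * (0:ℝ) ^ k) = 1
    rw [tsum_eq_single 0 (fun k hk => by simp [zero_pow hk])]
    simp [mlc_zero hr]
  have hg0 : g 0 = 1 := by
    show (1 - (0:ℝ)) ^ r * f 0 = 1
    simp [hf0]
  have h1x : (0:ℝ) < 1 - x := by linarith [(abs_lt.mp hx).2]
  have hgx : (1 - x) ^ r * f x = 1 := hconst.trans hg0
  have hfx : f x = (1 - x) ^ (-r) := by
    rw [Real.rpow_neg h1x.le]
    exact eq_inv_of_mul_eq_one_left (by rw [mul_comm]; exact hgx)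
  have := (summable_mlc_mul_pow hr hx).hasSum
  rwa [show ∑' k : ℕ, mlc r k * x ^ k = f x from rfl, hfx] at this

lemma integrable_tsum_aux {μ : Measure ℝ} {F : ℕ → ℝ → ℝ}
    (hF : ∀ k, Integrable (F k) μ) (hsum : Summable fun k => ∫ a, ‖F k a‖ ∂μ) :
    Integrable (fun a => ∑' k, F k a) μ := by
  have hmeas : ∀ k, AEStronglyMeasurable (F k) μ := fun k => (hF k).1
  have hlint : ∀ k, ∫⁻ a, (‖F k a‖₊ : ENNReal) ∂μ = ENNReal.ofReal (∫ a, ‖F k a‖ ∂μ) :=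
    fun k => (ofReal_integral_norm_eq_lintegral_enorm (hF k)).symm
  have htop : ∑' k, ∫⁻ a, (‖F k a‖₊ : ENNReal) ∂μ ≠ ⊤ := by
    simp_rw [hlint]
    rw [← ENNReal.ofReal_tsum_of_nonneg (fun k => integral_nonneg fun a => norm_nonneg _) hsum]
    exact ENNReal.ofReal_ne_top
  have hlintsum : ∫⁻ a, ∑' k, (‖F k a‖₊ : ENNReal) ∂μ ≠ ⊤ := by
    rw [lintegral_tsum (f := fun k a => (‖F k a‖₊ : ENNReal)) fun k => (hmeas k).enorm]; exact htop
  have hae : ∀ᵐ a ∂μ, Summable fun k => ‖F k a‖ := by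
    have h0 := ae_lt_top' (AEMeasurable.ennreal_tsum fun k => (hmeas k).enorm) hlintsum
    filter_upwards [h0] with a ha
    have h2 : Summable fun k => ((‖F k a‖₊ : NNReal) : ℝ) := by
      rw [← ENNReal.tsum_coe_ne_top_iff_summable_coe]
      exact ha.ne
    simpa [coe_nnnorm] using h2
  constructor
  · rw [aestronglyMeasurable_iff_aemeasurable]
    apply aemeasurable_of_tendsto_metrizable_ae atTop
      (fun n => Finset.aemeasurable_fun_sum (Finset.range n)
        fun k _ => ((hmeas k).aemeasurable))
    filter_upwards [hae] with a ha
    exact ha.of_norm.hasSum.tendsto_sum_nat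
  · show (∫⁻ a, (‖∑' k, F k a‖₊ : ENNReal) ∂μ) < ⊤
    apply lt_of_le_of_lt (lintegral_mono_ae ?_) hlintsum.lt_top
    filter_upwards [hae] with a ha
    rw [← enorm_eq_nnnorm, ← ofReal_norm]
    calc ENNReal.ofReal ‖∑' k, F k a‖
        ≤ ENNReal.ofReal (∑' k, ‖F k a‖) :=
          ENNReal.ofReal_le_ofReal (norm_tsum_le_tsum_norm ha)
      _ = ∑' k, ENNReal.ofReal ‖F k a‖ :=
          ENNReal.ofReal_tsum_of_nonneg (fun k => norm_nonneg _) ha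
      _ = ∑' k, (‖F k a‖₊ : ENNReal) := tsum_congr fun k => ofReal_norm (F k a)

lemma exp_rpow_integrableOn {s c : ℝ} (hs : 0 < s) (hc : 0 < c) :
    IntegrableOn (fun t : ℝ => Real.exp (-(s * t)) * t ^ (c - 1)) (Ioi 0) := by
  have base : IntegrableOn (fun x : ℝ => Real.exp (-x) * x ^ (c - 1)) (Ioi 0) :=
    Real.GammaIntegral_convergent hc
  have comp : IntegrableOn (fun x : ℝ => Real.exp (-(s * x)) * (s * x) ^ (c - 1)) (Ioi 0) := by
    have := (integrableOn_Ioi_comp_mul_left_iff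
      (fun x : ℝ => Real.exp (-x) * x ^ (c - 1)) 0 hs).2
    simpa using this (by simpa using base)
  have := comp.const_mul ((s : ℝ) ^ (c - 1))⁻¹
  apply IntegrableOn.congr_fun this ?_ measurableSet_Ioi
  intro t ht
  have hsp : (0:ℝ) < s ^ (c-1) := Real.rpow_pos_of_pos hs _
  show (s ^ (c - 1))⁻¹ * (Real.exp (-(s * t)) * (s * t) ^ (c - 1))
      = Real.exp (-(s * t)) * t ^ (c - 1)
  rw [Real.mul_rpow hs.le (le_of_lt ht)]
  field_simp

lemma exp_rpow_integral {s c : ℝ} (hs : 0 < s) (hc : 0 < c) :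
    ∫ t in Ioi (0:ℝ), Real.exp (-(s * t)) * t ^ (c - 1)
      = Real.Gamma c * (1 / s) ^ c := by
  rw [show Real.Gamma c * (1/s)^c = (1/s)^c * Real.Gamma c by ring,
    ← Real.integral_rpow_mul_exp_neg_mul_Ioi hc hs]
  exact setIntegral_congr_fun measurableSet_Ioi fun t ht => by ring

/-- for a > 0, b > 0, r > 0, lam real and s > 0 with |lam| < s^a, the
Laplace transform of t^(b-1) * E^r_{a,b}(lam*t^a) converges and equals
s^(a*r-b) / (s^a - lam)^r. -/
theorem laplace_mlf_general (a b r lam s : ℝ) (ha : 0 < a) (hb : 0 < b) (hr : 0 < r)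
    (hs : 0 < s) (hlam : |lam| < s ^ a) :
    IntegrableOn (fun t : ℝ => Real.exp (-(s * t)) * t ^ (b - 1) * mlf a b r (lam * t ^ a))
      (Ioi 0) ∧
    ∫ t in Ioi (0 : ℝ), Real.exp (-(s * t)) * t ^ (b - 1) * mlf a b r (lam * t ^ a) =
      s ^ (a * r - b) / (s ^ a - lam) ^ r := by
  have hsa : (0:ℝ) < s ^ a := Real.rpow_pos_of_pos hs a
  have h1s : (0:ℝ) < 1 / s := by positivity
  have hinv : (1 / s : ℝ) ^ a = (s ^ a)⁻¹ := by
    rw [one_div, Real.inv_rpow hs.le]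
  set x0 : ℝ := lam * (1 / s) ^ a with hx0def
  have hax0 : |x0| = |lam| * (1/s) ^ a := by
    rw [hx0def, abs_mul, abs_of_pos (Real.rpow_pos_of_pos h1s a)]
  have hx0 : |x0| < 1 := by
    rw [hax0, hinv, ← div_eq_mul_inv]
    exact (div_lt_one hsa).2 hlam
  have hab : ∀ k : ℕ, (0:ℝ) < a * k + b := fun k => by positivity
  have hΓab : ∀ k : ℕ, (0:ℝ) < Real.Gamma (a * k + b) :=
    fun k => Real.Gamma_pos_of_pos (hab k)
  set F : ℕ → ℝ → ℝ := fun k t =>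
    mlc r k / Real.Gamma (a * k + b) * lam ^ k *
      (Real.exp (-(s * t)) * t ^ (a * k + b - 1)) with hF
  have hFint : ∀ k, IntegrableOn (F k) (Ioi 0) := fun k =>
    (exp_rpow_integrableOn hs (hab k)).const_mul _
  have hptwise : ∀ t ∈ Ioi (0:ℝ),
      Real.exp (-(s * t)) * t ^ (b - 1) * mlf a b r (lam * t ^ a) = ∑' k, F k t := by
    intro t ht
    have ht0 : (0:ℝ) < t := ht
    rw [mlf, ← tsum_mul_left]
    apply tsum_congr
    intro k
    have h1 : (t ^ a) ^ (k:ℕ) = t ^ (a * k) := by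
      rw [← Real.rpow_natCast (t ^ a) k, ← Real.rpow_mul ht0.le]
    have h2 : t ^ (a * k + b - 1) = t ^ (b - 1) * t ^ (a * (k:ℝ)) := by
      rw [← Real.rpow_add ht0]
      congr 1
      ring
    show Real.exp (-(s * t)) * t ^ (b - 1) *
        (Real.Gamma (r + k) / (Real.Gamma r * Real.Gamma (a * k + b)) * (lam * t ^ a) ^ k /
          (Nat.factorial k : ℝ)) = F k t
    rw [hF]
    simp only []
    rw [mul_pow, h1, h2, mlc]
    ring
  have key : ∀ (k : ℕ) (l : ℝ),
      mlc r k / Real.Gamma (a * k + b) * l ^ k * (Real.Gamma (a * k + b) * (1/s) ^ (a * k + b))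
        = mlc r k * (l * (1/s) ^ a) ^ k * (1/s) ^ b := by
    intro k l
    have e1 : (1/s : ℝ) ^ (a * (k:ℝ) + b) = ((1/s) ^ a) ^ (k:ℕ) * (1/s) ^ b := by
      rw [Real.rpow_add h1s, ← Real.rpow_natCast ((1/s) ^ a) k, ← Real.rpow_mul h1s.le]
    rw [e1, mul_pow]
    field_simp
  have hFval : ∀ k, ∫ t in Ioi (0:ℝ), F k t = mlc r k * x0 ^ k * (1/s) ^ b := by
    intro k
    rw [hF]
    simp only []
    rw [MeasureTheory.integral_const_mul, exp_rpow_integral hs (hab k),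
      show Real.Gamma (a * k + b) * (1 / s) ^ (a * k + b)
        = Real.Gamma (a * k + b) * (1/s) ^ (a * k + b) from rfl, key k lam, hx0def]
  have hFnorm : ∀ k, ∫ t in Ioi (0:ℝ), ‖F k t‖ = mlc r k * |x0| ^ k * (1/s) ^ b := by
    intro k
    have heq : ∀ t ∈ Ioi (0:ℝ), ‖F k t‖ =
        mlc r k / Real.Gamma (a * k + b) * |lam| ^ k *
          (Real.exp (-(s * t)) * t ^ (a * k + b - 1)) := by
      intro t ht
      have ht0 : (0:ℝ) < t := ht
      rw [hF]
      simp only []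
      rw [Real.norm_eq_abs, abs_mul, abs_mul, abs_div, abs_pow,
        abs_of_pos (mlc_pos hr k), abs_of_pos (hΓab k),
        abs_of_pos (mul_pos (Real.exp_pos _) (Real.rpow_pos_of_pos ht0 _))]
    rw [setIntegral_congr_fun measurableSet_Ioi heq,
      MeasureTheory.integral_const_mul, exp_rpow_integral hs (hab k), key k |lam|, ← hax0]
  have hnormsum : Summable fun k => ∫ t in Ioi (0:ℝ), ‖F k t‖ := by
    apply Summable.congr _ (fun k => (hFnorm k).symm)
    have : Summable fun k : ℕ => mlc r k * |x0| ^ k :=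
      summable_mlc_mul_pow hr (by rwa [abs_abs])
    exact this.mul_right _
  have hint : Integrable (fun t => ∑' k, F k t) (volume.restrict (Ioi 0)) :=
    integrable_tsum_aux hFint hnormsum
  have hIntOn : IntegrableOn
      (fun t : ℝ => Real.exp (-(s * t)) * t ^ (b - 1) * mlf a b r (lam * t ^ a)) (Ioi 0) := by
    apply hint.congr
    filter_upwards [ae_restrict_mem measurableSet_Ioi] with t ht
    exact (hptwise t ht).symm
  refine ⟨hIntOn, ?_⟩
  have hsl : (0:ℝ) < s ^ a - lam := by
    have := le_abs_self lam
    linarith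
  calc ∫ t in Ioi (0:ℝ), Real.exp (-(s * t)) * t ^ (b - 1) * mlf a b r (lam * t ^ a)
      = ∫ t in Ioi (0:ℝ), ∑' k, F k t :=
        setIntegral_congr_fun measurableSet_Ioi hptwise
    _ = ∑' k, ∫ t in Ioi (0:ℝ), F k t :=
        (integral_tsum_of_summable_integral_norm hFint hnormsum).symm
    _ = ∑' k, mlc r k * x0 ^ k * (1/s) ^ b := tsum_congr hFval
    _ = (∑' k, mlc r k * x0 ^ k) * (1/s) ^ b := tsum_mul_right
    _ = (1 - x0) ^ (-r) * (1/s) ^ b := by rw [(hasSum_mlc hr hx0).tsum_eq]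
    _ = s ^ (a * r - b) / (s ^ a - lam) ^ r := by
        have e0 : 1 - x0 = (s ^ a - lam) * (s ^ a)⁻¹ := by
          rw [hx0def, hinv]
          field_simp
        rw [e0, Real.mul_rpow hsl.le (inv_nonneg.2 hsa.le),
          Real.inv_rpow hsa.le, Real.rpow_neg hsl.le, Real.rpow_neg hsa.le, inv_inv,
          show ((s^a) ^ r) = s ^ (a * r) from (Real.rpow_mul hs.le a r).symm,
          one_div, Real.inv_rpow hs.le, ← Real.rpow_neg hs.le,
          show (-b) = a * r - b - (a*r) by ring, Real.rpow_sub hs (a*r-b) (a*r)]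
        field_simp [(Real.rpow_pos_of_pos hs (a*r)).ne', (Real.rpow_pos_of_pos hsl r).ne']
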